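/- arXiv:2507.02889 — 2 statements merged into one kernel-verified Lean document; each statement's English description precedes it below -/
import Mathlib

section
/- Let α₁, β₁, α₂, β₂ > 0, λ ∈ ℝ, and let s > 0 be a real number. Then ∫₀^∞ e^{−st} · (∑_{k=0}^∞ λ^k · t^{α₁k+β₁−1} · (ln t − ψ(α₁k+β₁)) / (Γ(α₁k+β₁) · Γ(α₂k+β₂))) dt = − (ln s / s^{β₁}) · ∑_{k=0}^∞ (λ · s^{−α₁})^k / Γ(α₂k+β₂), i.e. equals − (ln s / s^{β₁}) · E_{α₂,β₂}(λ s^{−α₁}). (The integrand series is the term-by-term derivative with respect to β₁ of t^{β₁−1} E_{(α₁,β₁),(α₂,β₂)}(λ t^{α₁}).) -/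
open Real MeasureTheory

/-- The digamma function `ψ(x) = the logarithmic derivative of Γ`, i.e. the derivative of `log ∘ Γ`. -/
noncomputable def digamma (x : ℝ) : ℝ := deriv (fun y : ℝ => Real.log (Real.Gamma y)) x


lemma hasDerivAt_Gamma_real {a : ℝ} (ha : 0 < a) :
    HasDerivAt Real.Gamma
      (∫ t in Set.Ioi (0:ℝ), t ^ (a-1) * (Real.log t * Real.exp (-t))) a := by
  have hre : 0 < (a:ℂ).re := by simpa using ha
  have h1 := Complex.hasDerivAt_GammaIntegral hre
  have heq : Complex.Gamma =ᶠ[nhds (a:ℂ)] Complex.GammaIntegral := by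
    filter_upwards [(isOpen_Ioi.preimage Complex.continuous_re).mem_nhds
      (by simpa using ha)] with z hz
    exact Complex.Gamma_eq_integral hz
  have h2 : HasDerivAt Complex.Gamma
      (∫ t : ℝ in Set.Ioi 0, (t:ℂ) ^ ((a:ℂ) - 1) * (Real.log t * Real.exp (-t))) (a:ℂ) :=
    h1.congr_of_eventuallyEq heq
  have h3 := h2.real_of_complex
  have hG : (fun x : ℝ => (Complex.Gamma (x:ℂ)).re) = Real.Gamma := by
    funext x
    rw [Complex.Gamma_ofReal, Complex.ofReal_re]
  rw [hG] at h3
  convert h3 using 1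
  have : (∫ t : ℝ in Set.Ioi 0, (t:ℂ) ^ ((a:ℂ) - 1) * (Real.log t * Real.exp (-t)))
      = ((∫ t in Set.Ioi (0:ℝ), t ^ (a-1) * (Real.log t * Real.exp (-t)) : ℝ) : ℂ) := by
    rw [show (∫ t : ℝ in Set.Ioi 0, (t:ℂ) ^ ((a:ℂ) - 1) * (Real.log t * Real.exp (-t)))
        = ∫ t in Set.Ioi (0:ℝ), ((t ^ (a-1) * (Real.log t * Real.exp (-t)) : ℝ) : ℂ) from
      setIntegral_congr_fun measurableSet_Ioi fun t ht => by
        rw [show ((a:ℂ)-1) = ((a-1 : ℝ) : ℂ) by push_cast; ring,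
          ← Complex.ofReal_cpow (le_of_lt ht)]
        push_cast
        ring]
    exact integral_ofReal
  rw [this, Complex.ofReal_re]

lemma abs_log_le {ε t : ℝ} (hε : 0 < ε) (ht : 0 < t) :
    |Real.log t| ≤ (t ^ ε + t ^ (-ε)) / ε := by
  rcases le_or_gt 1 t with h | h
  · have h0 : Real.log t = Real.log (t ^ ε) / ε := by
      rw [Real.log_rpow ht]; field_simp
    rw [abs_of_nonneg (Real.log_nonneg h), h0]
    have h1 : Real.log (t ^ ε) ≤ t ^ ε - 1 := Real.log_le_sub_one_of_pos (by positivity)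
    have h2 : (0:ℝ) ≤ t ^ (-ε) := by positivity
    rw [div_le_div_iff_of_pos_right hε]  -- maybe wrong name
    nlinarith
  · have h0 : -Real.log t = Real.log (t ^ (-ε)) / ε := by
      rw [Real.log_rpow ht]; field_simp
    rw [abs_of_nonpos (Real.log_nonpos ht.le h.le), h0]
    have h1 : Real.log (t ^ (-ε)) ≤ t ^ (-ε) - 1 := Real.log_le_sub_one_of_pos (by positivity)
    have h2 : (0:ℝ) ≤ t ^ ε := by positivity
    rw [div_le_div_iff_of_pos_right hε]
    nlinarith

lemma integrableOn_exp_rpow {q s : ℝ} (hq : -1 < q) (hs : 0 < s) :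
    IntegrableOn (fun t => Real.exp (-(s*t)) * t ^ q) (Set.Ioi 0) := by
  have := integrableOn_rpow_mul_exp_neg_mul_rpow hq one_pos hs
  refine this.congr_fun (fun t ht => ?_) measurableSet_Ioi
  dsimp only
  rw [Real.rpow_one, neg_mul, mul_comm]

lemma integral_exp_rpow {a s : ℝ} (ha : 0 < a) (hs : 0 < s) :
    ∫ t in Set.Ioi (0:ℝ), Real.exp (-(s*t)) * t ^ (a-1) = Real.Gamma a * s ^ (-a) := by
  have := integral_rpow_mul_exp_neg_mul_rpow one_pos (by linarith : (-1:ℝ) < a - 1) hs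
  rw [show ∫ t in Set.Ioi (0:ℝ), Real.exp (-(s*t)) * t ^ (a-1)
      = ∫ x in Set.Ioi (0:ℝ), x ^ (a-1) * Real.exp (-s * x ^ (1:ℝ)) from
    setIntegral_congr_fun measurableSet_Ioi fun t ht => by rw [Real.rpow_one, neg_mul, mul_comm],
    this]
  rw [show -(a-1+1)/1 = -a by ring, show (a-1+1)/1 = a by ring]
  ring

lemma continuousOn_kernel (a s : ℝ) :
    ContinuousOn (fun t => Real.exp (-(s*t)) * (t ^ (a-1) * Real.log t)) (Set.Ioi 0) := by
  intro t ht
  have ht0 : t ≠ 0 := ne_of_gt ht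
  exact (((Real.continuous_exp.comp (continuous_const.mul continuous_id).neg).continuousAt.mul
    (((Real.continuousAt_rpow_const t (a-1) (Or.inl ht0))).mul
      (Real.continuousAt_log ht0)))).continuousWithinAt

lemma integrableOn_log_kernel {a s : ℝ} (ha : 0 < a) (hs : 0 < s) :
    IntegrableOn (fun t => Real.exp (-(s*t)) * (t ^ (a-1) * Real.log t)) (Set.Ioi 0) := by
  set ε := a/2 with hε
  have hε0 : 0 < ε := by positivity
  have hg : IntegrableOn (fun t => (Real.exp (-(s*t)) * t ^ (a-1+ε)
      + Real.exp (-(s*t)) * t ^ (a-1-ε)) / ε) (Set.Ioi 0) :=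
    ((integrableOn_exp_rpow (by linarith) hs).add
      (integrableOn_exp_rpow (by simp [hε]; linarith) hs)).div_const ε
  refine hg.mono' ((continuousOn_kernel a s).aestronglyMeasurable measurableSet_Ioi) ?_
  rw [ae_restrict_iff' measurableSet_Ioi]
  filter_upwards with t ht
  have ht0 : (0:ℝ) < t := ht
  have h1 : |Real.log t| ≤ (t ^ ε + t ^ (-ε)) / ε := abs_log_le hε0 ht0
  have he : (0:ℝ) < Real.exp (-(s*t)) := Real.exp_pos _
  have htp : (0:ℝ) ≤ t ^ (a-1) := by positivity
  rw [Real.norm_eq_abs, abs_mul, abs_mul, abs_of_pos he, abs_of_nonneg htp]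
  have h2 : Real.exp (-(s*t)) * (t ^ (a-1) * |Real.log t|)
      ≤ Real.exp (-(s*t)) * (t ^ (a-1) * ((t ^ ε + t ^ (-ε)) / ε)) := by
    gcongr
  refine h2.trans (le_of_eq ?_)
  rw [show a - 1 + ε = (a-1) + ε by ring, show a - 1 - ε = (a-1) + (-ε) by ring,
    Real.rpow_add ht0, Real.rpow_add ht0]
  field_simp

lemma integral_log_kernel {a s : ℝ} (ha : 0 < a) (hs : 0 < s) :
    ∫ t in Set.Ioi (0:ℝ), Real.exp (-(s*t)) * (t ^ (a-1) * Real.log t)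
      = (deriv Real.Gamma a - Real.Gamma a * Real.log s) * s ^ (-a) := by
  set G' := ∫ t in Set.Ioi (0:ℝ), t ^ (a-1) * (Real.log t * Real.exp (-t)) with hG'
  have hderiv : deriv Real.Gamma a = G' := (hasDerivAt_Gamma_real ha).deriv
  set I := ∫ t in Set.Ioi (0:ℝ), Real.exp (-(s*t)) * (t ^ (a-1) * Real.log t) with hI
  set g : ℝ → ℝ := fun u => Real.exp (-u) * (u ^ (a-1) * Real.log u) with hg
  have hint1 : IntegrableOn (fun t => Real.exp (-(s*t)) * (t ^ (a-1) * Real.log t))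
      (Set.Ioi (0:ℝ)) := integrableOn_log_kernel ha hs
  have hint2 : IntegrableOn (fun t => Real.exp (-(s*t)) * t ^ (a-1)) (Set.Ioi (0:ℝ)) :=
    integrableOn_exp_rpow (by linarith) hs
  have key : s ^ (a-1) * I + (Real.log s * s ^ (a-1)) * (Real.Gamma a * s ^ (-a))
      = s⁻¹ * G' := by
    have h1 : ∫ t in Set.Ioi (0:ℝ), (s ^ (a-1) * (Real.exp (-(s*t)) * (t ^ (a-1) * Real.log t))
          + (Real.log s * s ^ (a-1)) * (Real.exp (-(s*t)) * t ^ (a-1)))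
        = s ^ (a-1) * I + (Real.log s * s ^ (a-1)) * (Real.Gamma a * s ^ (-a)) := by
      rw [integral_add (hint1.const_mul _) (hint2.const_mul _), integral_const_mul,
        integral_const_mul, integral_exp_rpow ha hs]
    have h2 : ∫ t in Set.Ioi (0:ℝ), (s ^ (a-1) * (Real.exp (-(s*t)) * (t ^ (a-1) * Real.log t))
          + (Real.log s * s ^ (a-1)) * (Real.exp (-(s*t)) * t ^ (a-1)))
        = ∫ t in Set.Ioi (0:ℝ), g (s * t) := by
      refine setIntegral_congr_fun measurableSet_Ioi fun t ht => ?_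
      have ht0 : (0:ℝ) < t := ht
      simp only [hg]
      rw [Real.mul_rpow hs.le ht0.le, Real.log_mul (ne_of_gt hs) (ne_of_gt ht0)]
      ring
    have h3 : ∫ t in Set.Ioi (0:ℝ), g (s * t) = s⁻¹ * ∫ u in Set.Ioi (s * 0), g u := by
      rw [integral_comp_mul_left_Ioi g 0 hs, smul_eq_mul]
    have h4 : ∫ u in Set.Ioi (s * 0), g u = G' := by
      rw [mul_zero, hG']
      refine setIntegral_congr_fun measurableSet_Ioi fun u hu => ?_
      simp only [hg]; ring
    rw [← h1, h2, h3, h4]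
  have hP : s ^ (a-1) ≠ 0 := (Real.rpow_pos_of_pos hs _).ne'
  have hPQ : s ^ (a-1) * s ^ (-a) = s⁻¹ := by
    rw [← Real.rpow_add hs, show a - 1 + -a = -1 by ring, Real.rpow_neg_one]
  rw [hderiv]
  apply mul_left_cancel₀ hP
  linear_combination key - G' * hPQ

lemma full_kernel_integral {a s : ℝ} (ha : 0 < a) (hs : 0 < s) :
    ∫ t in Set.Ioi (0:ℝ), Real.exp (-(s*t)) * (t ^ (a-1) * (Real.log t - digamma a))
      = -(Real.log s * Real.Gamma a * s ^ (-a)) := by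
  have hΓ : 0 < Real.Gamma a := Real.Gamma_pos_of_pos ha
  have hdiff : DifferentiableAt ℝ Real.Gamma a := by
    refine Real.differentiableAt_Gamma fun m => ?_
    have : (0:ℝ) ≤ m := Nat.cast_nonneg m
    linarith
  have hψ : digamma a = deriv Real.Gamma a / Real.Gamma a := by
    have := (hdiff.hasDerivAt.log hΓ.ne')
    exact this.deriv
  have hsplit : ∫ t in Set.Ioi (0:ℝ), Real.exp (-(s*t)) * (t ^ (a-1) * (Real.log t - digamma a))
      = (∫ t in Set.Ioi (0:ℝ), Real.exp (-(s*t)) * (t ^ (a-1) * Real.log t))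
        - digamma a * ∫ t in Set.Ioi (0:ℝ), Real.exp (-(s*t)) * t ^ (a-1) := by
    rw [← integral_const_mul, ← integral_sub (integrableOn_log_kernel ha hs)
      ((integrableOn_exp_rpow (by linarith) hs).const_mul _)]
    refine setIntegral_congr_fun measurableSet_Ioi fun t ht => ?_
    ring
  rw [hsplit, integral_log_kernel ha hs, integral_exp_rpow ha hs, hψ]
  field_simp
  ring

lemma Gamma_ratio_upper {a ε : ℝ} (ha : 0 < a) (hε : 0 < ε) :
    Real.Gamma (a + ε) ≤ Real.Gamma a * (a + ε) ^ ε := by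
  have hf := Real.convexOn_log_Gamma
  have hslope := hf.slope_mono_adjacent (Set.mem_Ioi.2 ha)
    (Set.mem_Ioi.2 (by linarith : (0:ℝ) < a + ε + 1))
    (by linarith : a < a + ε) (by linarith : a + ε < a + ε + 1)
  simp only [Function.comp] at hslope
  have hstep : Real.log (Real.Gamma (a + ε + 1)) - Real.log (Real.Gamma (a + ε))
      = Real.log (a + ε) := by
    rw [Real.Gamma_add_one (by positivity), Real.log_mul (by positivity)
      (Real.Gamma_pos_of_pos (by positivity)).ne']
    ring
  have h1 : Real.log (Real.Gamma (a + ε)) ≤ Real.log (Real.Gamma a) + ε * Real.log (a + ε) := by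
    rw [show a + ε + 1 - (a + ε) = 1 by ring] at hslope
    rw [show a + ε - a = ε by ring] at hslope
    have := (div_le_iff₀ hε).mp (hslope.trans_eq (by rw [hstep, div_one]))
    linarith
  calc Real.Gamma (a + ε) = Real.exp (Real.log (Real.Gamma (a + ε))) :=
        (Real.exp_log (Real.Gamma_pos_of_pos (by positivity))).symm
    _ ≤ Real.exp (Real.log (Real.Gamma a) + ε * Real.log (a + ε)) := Real.exp_le_exp.2 h1
    _ = Real.Gamma a * (a + ε) ^ ε := by
        rw [Real.exp_add, Real.exp_log (Real.Gamma_pos_of_pos ha),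
          ← Real.log_rpow (by positivity), Real.exp_log (by positivity)]

lemma Gamma_ratio_lower {a ε : ℝ} (ha : 1 < a) (hε : 0 < ε) :
    Real.Gamma a * (a - 1) ^ ε ≤ Real.Gamma (a + ε) := by
  have hf := Real.convexOn_log_Gamma
  have hslope := hf.slope_mono_adjacent (Set.mem_Ioi.2 (by linarith : (0:ℝ) < a - 1))
    (Set.mem_Ioi.2 (by linarith : (0:ℝ) < a + ε))
    (by linarith : a - 1 < a) (by linarith : a < a + ε)
  simp only [Function.comp] at hslope
  have hstep : Real.log (Real.Gamma a) - Real.log (Real.Gamma (a - 1))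
      = Real.log (a - 1) := by
    rw [show a = (a - 1) + 1 by ring, Real.Gamma_add_one (by linarith : (0:ℝ) < a - 1).ne',
      Real.log_mul (by linarith : (0:ℝ) < a - 1).ne' (Real.Gamma_pos_of_pos (by linarith)).ne']
    ring
  have h1 : Real.log (Real.Gamma a) + ε * Real.log (a - 1) ≤ Real.log (Real.Gamma (a + ε)) := by
    rw [show a - (a - 1) = 1 by ring, show a + ε - a = ε by ring, hstep, div_one] at hslope
    have := (le_div_iff₀ hε).mp hslope
    linarith
  calc Real.Gamma a * (a - 1) ^ ε
      = Real.exp (Real.log (Real.Gamma a) + ε * Real.log (a - 1)) := by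
        rw [Real.exp_add, Real.exp_log (Real.Gamma_pos_of_pos (by linarith)),
          ← Real.log_rpow (by linarith : (0:ℝ) < a - 1),
          Real.exp_log (Real.rpow_pos_of_pos (by linarith) _)]
    _ ≤ Real.exp (Real.log (Real.Gamma (a + ε))) := Real.exp_le_exp.2 h1
    _ = Real.Gamma (a + ε) := Real.exp_log (Real.Gamma_pos_of_pos (by linarith))

lemma integral_abslog_le {a ε s : ℝ} (hε : 0 < ε) (hεa : ε < a) (hs : 0 < s) :
    ∫ t in Set.Ioi (0:ℝ), Real.exp (-(s*t)) * (t ^ (a-1) * |Real.log t|)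
      ≤ (Real.Gamma (a+ε) * s ^ (-(a+ε)) + Real.Gamma (a-ε) * s ^ (-(a-ε))) / ε := by
  have hintL : IntegrableOn (fun t => Real.exp (-(s*t)) * (t ^ (a-1) * |Real.log t|))
      (Set.Ioi (0:ℝ)) := by
    refine IntegrableOn.congr_fun ((integrableOn_log_kernel (by linarith : (0:ℝ) < a) hs).abs)
      (fun t ht => ?_) measurableSet_Ioi
    have ht0 : (0:ℝ) < t := ht
    rw [abs_mul, abs_mul, abs_of_pos (Real.exp_pos _),
      abs_of_nonneg (Real.rpow_nonneg ht0.le _)]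
  have hintR : IntegrableOn (fun t => (Real.exp (-(s*t)) * t ^ ((a+ε)-1)
      + Real.exp (-(s*t)) * t ^ ((a-ε)-1)) / ε) (Set.Ioi (0:ℝ)) :=
    ((integrableOn_exp_rpow (by linarith) hs).add
      (integrableOn_exp_rpow (by linarith) hs)).div_const ε
  have hmono : ∫ t in Set.Ioi (0:ℝ), Real.exp (-(s*t)) * (t ^ (a-1) * |Real.log t|)
      ≤ ∫ t in Set.Ioi (0:ℝ), (Real.exp (-(s*t)) * t ^ ((a+ε)-1)
          + Real.exp (-(s*t)) * t ^ ((a-ε)-1)) / ε := by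
    refine setIntegral_mono_on hintL hintR measurableSet_Ioi fun t ht => ?_
    have ht0 : (0:ℝ) < t := ht
    have h1 : Real.exp (-(s*t)) * (t ^ (a-1) * |Real.log t|)
        ≤ Real.exp (-(s*t)) * (t ^ (a-1) * ((t ^ ε + t ^ (-ε)) / ε)) :=
      mul_le_mul_of_nonneg_left (mul_le_mul_of_nonneg_left (abs_log_le hε ht0)
        (Real.rpow_nonneg ht0.le _)) (Real.exp_pos _).le
    refine h1.trans (le_of_eq ?_)
    rw [show (a+ε)-1 = (a-1) + ε by ring, show (a-ε)-1 = (a-1) + (-ε) by ring,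
      Real.rpow_add ht0, Real.rpow_add ht0]
    field_simp
  refine hmono.trans (le_of_eq ?_)
  rw [integral_div, integral_add (integrableOn_exp_rpow (by linarith) hs)
    (integrableOn_exp_rpow (by linarith) hs),
    integral_exp_rpow (by linarith) hs, integral_exp_rpow (by linarith) hs]

lemma abs_deriv_Gamma_le {a ε : ℝ} (hε : 0 < ε) (hεa : ε < a) :
    |deriv Real.Gamma a| ≤ (Real.Gamma (a+ε) + Real.Gamma (a-ε)) / ε := by
  rw [(hasDerivAt_Gamma_real (by linarith : (0:ℝ) < a)).deriv]
  rw [← Real.norm_eq_abs]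
  refine (norm_integral_le_integral_norm _).trans ?_
  have h2 : ∫ t in Set.Ioi (0:ℝ), ‖t ^ (a-1) * (Real.log t * Real.exp (-t))‖
      = ∫ t in Set.Ioi (0:ℝ), Real.exp (-(1*t)) * (t ^ (a-1) * |Real.log t|) := by
    refine setIntegral_congr_fun measurableSet_Ioi fun t ht => ?_
    have ht0 : (0:ℝ) < t := ht
    rw [Real.norm_eq_abs, abs_mul, abs_mul, abs_of_nonneg (Real.rpow_nonneg ht0.le _),
      abs_of_pos (Real.exp_pos _), one_mul]
    ring
  rw [h2]
  refine (integral_abslog_le hε hεa one_pos).trans (le_of_eq ?_)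
  rw [Real.one_rpow, Real.one_rpow]
  ring_nf

lemma abs_digamma_le {a ε : ℝ} (hε : 0 < ε) (hε1 : ε ≤ 1) (ha : 2 + ε ≤ a) :
    |digamma a| ≤ (a + ε + 1) / ε := by
  have ha0 : (0:ℝ) < a := by linarith
  have hΓ : 0 < Real.Gamma a := Real.Gamma_pos_of_pos ha0
  have hdiff : DifferentiableAt ℝ Real.Gamma a := by
    refine Real.differentiableAt_Gamma fun m => ?_
    have : (0:ℝ) ≤ m := Nat.cast_nonneg m
    linarith
  have hψ : digamma a = deriv Real.Gamma a / Real.Gamma a := (hdiff.hasDerivAt.log hΓ.ne').deriv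
  have hU : Real.Gamma (a+ε) ≤ Real.Gamma a * (a+ε) := by
    refine (Gamma_ratio_upper ha0 hε).trans ?_
    have h2 : (a+ε) ^ ε ≤ (a+ε) ^ (1:ℝ) :=
      Real.rpow_le_rpow_of_exponent_le (by linarith) hε1
    rw [Real.rpow_one] at h2
    exact mul_le_mul_of_nonneg_left h2 hΓ.le
  have hL : Real.Gamma (a-ε) ≤ Real.Gamma a := by
    have h3 := Gamma_ratio_lower (a := a - ε) (ε := ε) (by linarith) hε
    rw [show a - ε + ε = a by ring] at h3
    have h4 : (1:ℝ) ≤ (a-ε-1) ^ ε := Real.one_le_rpow (by linarith) hε.le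
    nlinarith [Real.Gamma_pos_of_pos (show (0:ℝ) < a - ε by linarith)]
  rw [hψ, abs_div, abs_of_pos hΓ, div_le_iff₀ hΓ]
  refine (abs_deriv_Gamma_le hε (by linarith)).trans ?_
  rw [div_mul_eq_mul_div, div_le_div_iff_of_pos_right hε]
  nlinarith

lemma integrableOn_full_kernel {a s : ℝ} (ha : 0 < a) (hs : 0 < s) :
    IntegrableOn (fun t => Real.exp (-(s*t)) * (t ^ (a-1) * (Real.log t - digamma a)))
      (Set.Ioi 0) := by
  have : (fun t => Real.exp (-(s*t)) * (t ^ (a-1) * (Real.log t - digamma a)))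
      = fun t => Real.exp (-(s*t)) * (t ^ (a-1) * Real.log t)
          - digamma a * (Real.exp (-(s*t)) * t ^ (a-1)) := by
    funext t; ring
  rw [this]
  exact (integrableOn_log_kernel ha hs).sub ((integrableOn_exp_rpow (by linarith) hs).const_mul _)

lemma norm_kernel_integral_le {a s ε : ℝ} (hε : 0 < ε) (hε1 : ε ≤ 1) (ha : 2 + ε ≤ a)
    (hs : 0 < s) :
    ∫ t in Set.Ioi (0:ℝ), ‖Real.exp (-(s*t)) * (t ^ (a-1) * (Real.log t - digamma a))‖
      ≤ Real.Gamma a * s ^ (-a) * ((max (s^ε) (s^(-ε)) + 1) * (a+ε+1) / ε) := by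
  have ha0 : (0:ℝ) < a := by linarith
  have hεa : ε < a := by linarith
  set M := max (s^ε) (s^(-ε)) with hM
  have hstep1 : ∫ t in Set.Ioi (0:ℝ),
        ‖Real.exp (-(s*t)) * (t ^ (a-1) * (Real.log t - digamma a))‖
      ≤ ∫ t in Set.Ioi (0:ℝ), (Real.exp (-(s*t)) * (t ^ (a-1) * |Real.log t|)
          + |digamma a| * (Real.exp (-(s*t)) * t ^ (a-1))) := by
    refine setIntegral_mono_on ((integrableOn_full_kernel ha0 hs).norm) ?_ measurableSet_Ioi ?_
    · refine Integrable.add ?_ ((integrableOn_exp_rpow (by linarith) hs).const_mul _)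
      have habs : IntegrableOn (fun t => Real.exp (-(s*t)) * (t ^ (a-1) * |Real.log t|))
          (Set.Ioi (0:ℝ)) := by
        refine IntegrableOn.congr_fun ((integrableOn_log_kernel ha0 hs).abs)
          (fun t ht => ?_) measurableSet_Ioi
        have ht0 : (0:ℝ) < t := ht
        rw [abs_mul, abs_mul, abs_of_pos (Real.exp_pos _),
          abs_of_nonneg (Real.rpow_nonneg ht0.le _)]
      exact habs
    · intro t ht
      have ht0 : (0:ℝ) < t := ht
      have htp : (0:ℝ) ≤ t ^ (a-1) := Real.rpow_nonneg ht0.le _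
      rw [Real.norm_eq_abs, abs_mul, abs_mul, abs_of_pos (Real.exp_pos _), abs_of_nonneg htp]
      have h1 : |Real.log t - digamma a| ≤ |Real.log t| + |digamma a| := abs_sub _ _
      linarith [mul_le_mul_of_nonneg_left h1 (mul_nonneg (Real.exp_pos (-(s*t))).le htp)]
  refine hstep1.trans ?_
  rw [integral_add ?int1 ((integrableOn_exp_rpow (by linarith) hs).const_mul _)]
  case int1 =>
    refine IntegrableOn.congr_fun ((integrableOn_log_kernel ha0 hs).abs)
      (fun t ht => ?_) measurableSet_Ioi
    have ht0 : (0:ℝ) < t := ht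
    rw [abs_mul, abs_mul, abs_of_pos (Real.exp_pos _),
      abs_of_nonneg (Real.rpow_nonneg ht0.le _)]
  rw [integral_const_mul, integral_exp_rpow ha0 hs]
  have h2 := integral_abslog_le hε hεa hs
  have h3 := abs_digamma_le hε hε1 ha
  have hΓ : 0 < Real.Gamma a := Real.Gamma_pos_of_pos ha0
  have hsa : 0 < s ^ (-a) := Real.rpow_pos_of_pos hs _
  have hU : Real.Gamma (a+ε) ≤ Real.Gamma a * (a+ε) := by
    refine (Gamma_ratio_upper ha0 hε).trans ?_
    have h4 : (a+ε) ^ ε ≤ (a+ε) ^ (1:ℝ) := Real.rpow_le_rpow_of_exponent_le (by linarith) hε1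
    rw [Real.rpow_one] at h4
    exact mul_le_mul_of_nonneg_left h4 hΓ.le
  have hL : Real.Gamma (a-ε) ≤ Real.Gamma a := by
    have h3' := Gamma_ratio_lower (a := a - ε) (ε := ε) (by linarith) hε
    rw [show a - ε + ε = a by ring] at h3'
    have h4 : (1:ℝ) ≤ (a-ε-1) ^ ε := Real.one_le_rpow (by linarith) hε.le
    nlinarith [Real.Gamma_pos_of_pos (show (0:ℝ) < a - ε by linarith)]
  have hsplit1 : s ^ (-(a+ε)) = s ^ (-a) * s ^ (-ε) := by
    rw [← Real.rpow_add hs]; ring_nf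
  have hsplit2 : s ^ (-(a-ε)) = s ^ (-a) * s ^ ε := by
    rw [← Real.rpow_add hs]; ring_nf
  have hM1 : s ^ (-ε) ≤ M := le_max_right _ _
  have hM2 : s ^ ε ≤ M := le_max_left _ _
  have hse : 0 < s ^ ε := Real.rpow_pos_of_pos hs _
  have hsne : 0 < s ^ (-ε) := Real.rpow_pos_of_pos hs _
  have hΓae : 0 < Real.Gamma (a+ε) := Real.Gamma_pos_of_pos (by linarith)
  have hΓse : 0 < Real.Gamma (a-ε) := Real.Gamma_pos_of_pos (by linarith)
  calc (∫ t in Set.Ioi (0:ℝ), Real.exp (-(s*t)) * (t ^ (a-1) * |Real.log t|))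
        + |digamma a| * (Real.Gamma a * s ^ (-a))
      ≤ (Real.Gamma (a+ε) * s ^ (-(a+ε)) + Real.Gamma (a-ε) * s ^ (-(a-ε))) / ε
          + ((a+ε+1)/ε) * (Real.Gamma a * s ^ (-a)) := by
        gcongr
    _ ≤ (Real.Gamma a * (a+ε) * (s ^ (-a) * M) + Real.Gamma a * (s ^ (-a) * M)) / ε
          + ((a+ε+1)/ε) * (Real.Gamma a * s ^ (-a)) := by
        gcongr ?_ / ε + _
        rw [hsplit1, hsplit2]
        have e1 : Real.Gamma (a+ε) * (s ^ (-a) * s ^ (-ε)) ≤ Real.Gamma a * (a+ε) * (s ^ (-a) * M) := by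
          refine mul_le_mul hU (by gcongr) (by positivity) (by positivity)
        have e2 : Real.Gamma (a-ε) * (s ^ (-a) * s ^ ε) ≤ Real.Gamma a * (s ^ (-a) * M) := by
          refine mul_le_mul hL (by gcongr) (by positivity) hΓ.le
        linarith
    _ = Real.Gamma a * s ^ (-a) * ((M + 1) * (a+ε+1) / ε) := by
        field_simp

theorem laplace_deriv_beta1_4ML (α₁ β₁ α₂ β₂ lam s : ℝ) (hα₁ : 0 < α₁) (hβ₁ : 0 < β₁)
    (hα₂ : 0 < α₂) (hβ₂ : 0 < β₂) (hs : 0 < s) :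
    (∫ t in Set.Ioi (0 : ℝ), Real.exp (-(s * t)) *
        ∑' k : ℕ, lam ^ k * t ^ (α₁ * k + β₁ - 1) *
          (Real.log t - digamma (α₁ * k + β₁)) /
            (Real.Gamma (α₁ * k + β₁) * Real.Gamma (α₂ * k + β₂)))
      = -((Real.log s / s ^ β₁) *
          ∑' k : ℕ, (lam * s ^ (-α₁)) ^ k / Real.Gamma (α₂ * k + β₂)) := by
  set ε : ℝ := min (β₁/2) 1 with hεdef
  have hε : 0 < ε := lt_min (by positivity) one_pos
  have hε1 : ε ≤ 1 := min_le_right _ _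
  set F : ℕ → ℝ → ℝ := fun k t => Real.exp (-(s * t)) *
    (lam ^ k * t ^ (α₁ * k + β₁ - 1) * (Real.log t - digamma (α₁ * k + β₁)) /
      (Real.Gamma (α₁ * k + β₁) * Real.Gamma (α₂ * k + β₂))) with hFdef
  have hA : ∀ k : ℕ, (0:ℝ) < α₁ * k + β₁ := fun k => by positivity
  have hB : ∀ k : ℕ, (0:ℝ) < α₂ * k + β₂ := fun k => by positivity
  have hΓA : ∀ k : ℕ, (0:ℝ) < Real.Gamma (α₁ * k + β₁) :=
    fun k => Real.Gamma_pos_of_pos (hA k)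
  have hΓB : ∀ k : ℕ, (0:ℝ) < Real.Gamma (α₂ * k + β₂) :=
    fun k => Real.Gamma_pos_of_pos (hB k)
  have hFeq : ∀ k : ℕ, F k = fun t =>
      (lam ^ k / (Real.Gamma (α₁ * k + β₁) * Real.Gamma (α₂ * k + β₂))) *
        (Real.exp (-(s * t)) * (t ^ (α₁ * k + β₁ - 1) *
          (Real.log t - digamma (α₁ * k + β₁)))) := by
    intro k; funext t; simp only [hFdef]; ring
  have hint : ∀ k : ℕ, Integrable (F k) (volume.restrict (Set.Ioi 0)) := by
    intro k
    rw [hFeq k]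
    exact (integrableOn_full_kernel (hA k) hs).const_mul _
  have hpow : ∀ k : ℕ, s ^ (-(α₁ * k + β₁)) = (s ^ (-α₁)) ^ k * s ^ (-β₁) := by
    intro k
    rw [← Real.rpow_natCast (s ^ (-α₁)) k, ← Real.rpow_mul hs.le, ← Real.rpow_add hs]
    ring_nf
  have hval : ∀ k : ℕ, (∫ t in Set.Ioi (0:ℝ), F k t)
      = (-(Real.log s) * s ^ (-β₁)) * ((lam * s ^ (-α₁)) ^ k /
          Real.Gamma (α₂ * k + β₂)) := by
    intro k
    rw [hFeq k, integral_const_mul, full_kernel_integral (hA k) hs, hpow k, mul_pow]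
    field_simp
  -- summability of the norm integrals
  set r : ℝ := |lam| * s ^ (-α₁) with hrdef
  have hr0 : 0 ≤ r := mul_nonneg (abs_nonneg _) (Real.rpow_pos_of_pos hs _).le
  set M : ℝ := max (s ^ ε) (s ^ (-ε)) with hMdef
  have hM0 : 0 < M := lt_max_of_lt_left (Real.rpow_pos_of_pos hs _)
  set D : ℝ := s ^ (-β₁) * (M + 1) / ε with hDdef
  have hD0 : 0 < D := by positivity
  set g : ℕ → ℝ := fun k => D * r ^ k * (α₁ * k + β₁ + ε + 1) / Real.Gamma (α₂ * k + β₂)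
    with hgdef
  have hg0 : ∀ k, 0 ≤ g k := by
    intro k
    have h1 : (0:ℝ) < α₁ * k + β₁ + ε + 1 := by positivity
    have := hΓB k
    positivity
  have hAtend : Filter.Tendsto (fun k : ℕ => α₁ * k + β₁) Filter.atTop Filter.atTop := by
    apply Filter.tendsto_atTop_add_const_right
    exact (tendsto_natCast_atTop_atTop (R := ℝ)).const_mul_atTop hα₁
  have hBtend : Filter.Tendsto (fun k : ℕ => α₂ * k + β₂) Filter.atTop Filter.atTop := by
    apply Filter.tendsto_atTop_add_const_right
    exact (tendsto_natCast_atTop_atTop (R := ℝ)).const_mul_atTop hα₂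
  have hBtend2 : Filter.Tendsto (fun k : ℕ => (α₂ * k + β₂ - 1) ^ α₂)
      Filter.atTop Filter.atTop :=
    (tendsto_rpow_atTop hα₂).comp (Filter.tendsto_atTop_add_const_right _ (-1) hBtend)
  have hgsum : Summable g := by
    refine summable_of_ratio_norm_eventually_le (r := 1/2) (by norm_num) ?_
    filter_upwards [hBtend2.eventually_ge_atTop (2 * (r * (1 + α₁))),
      hBtend.eventually_ge_atTop 2] with k hk1 hk2
    rw [Real.norm_eq_abs, Real.norm_eq_abs, abs_of_nonneg (hg0 _), abs_of_nonneg (hg0 _)]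
    have hBk1 : α₂ * ((k+1 : ℕ) : ℝ) + β₂ = (α₂ * k + β₂) + α₂ := by push_cast; ring
    have hAk1 : α₁ * ((k+1 : ℕ) : ℝ) + β₁ + ε + 1 = (α₁ * k + β₁ + ε + 1) + α₁ := by
      push_cast; ring
    have hBgt1 : (1:ℝ) < α₂ * k + β₂ := by linarith
    have hΓlow := Gamma_ratio_lower hBgt1 hα₂
    have hpos1 : (0:ℝ) < (α₂ * k + β₂ - 1) ^ α₂ := Real.rpow_pos_of_pos (by linarith) _
    have hApos : (0:ℝ) < α₁ * k + β₁ + ε + 1 := by positivity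
    have hstep : g (k+1) ≤ (D * r ^ k * (α₁ * k + β₁ + ε + 1) * (r * (1 + α₁))) /
        (Real.Gamma (α₂ * k + β₂) * (α₂ * k + β₂ - 1) ^ α₂) := by
      simp only [hgdef]
      rw [hBk1, hAk1]
      refine div_le_div₀ (by positivity) ?_ (by positivity) (by linarith [hΓlow])
      have h2 : (α₁ * k + β₁ + ε + 1) + α₁ ≤ (1 + α₁) * (α₁ * k + β₁ + ε + 1) := by
        nlinarith [mul_nonneg hα₁.le (show (0:ℝ) ≤ α₁ * ↑k + β₁ + ε by positivity)]
      calc D * r ^ (k+1) * ((α₁ * k + β₁ + ε + 1) + α₁)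
          ≤ D * r ^ (k+1) * ((1 + α₁) * (α₁ * k + β₁ + ε + 1)) := by
            refine mul_le_mul_of_nonneg_left h2 (by positivity)
        _ = D * r ^ k * (α₁ * k + β₁ + ε + 1) * (r * (1 + α₁)) := by ring
    refine hstep.trans ?_
    have heq : (D * r ^ k * (α₁ * k + β₁ + ε + 1) * (r * (1 + α₁))) /
        (Real.Gamma (α₂ * k + β₂) * (α₂ * k + β₂ - 1) ^ α₂)
        = g k * ((r * (1 + α₁)) / (α₂ * k + β₂ - 1) ^ α₂) := by
      simp only [hgdef]
      field_simp
    rw [heq]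
    have hfac : (r * (1 + α₁)) / (α₂ * k + β₂ - 1) ^ α₂ ≤ 1/2 := by
      rw [div_le_iff₀ hpos1]
      linarith
    calc g k * ((r * (1 + α₁)) / (α₂ * k + β₂ - 1) ^ α₂) ≤ g k * (1/2) :=
          mul_le_mul_of_nonneg_left hfac (hg0 k)
      _ = 1/2 * g k := by ring
  -- the eventual bound on norm integrals
  have hbound : ∀ᶠ k in Filter.atTop,
      (∫ t in Set.Ioi (0:ℝ), ‖F k t‖) ≤ g k := by
    filter_upwards [hAtend.eventually_ge_atTop (2 + ε)] with k hk
    have h1 : ∫ t in Set.Ioi (0:ℝ), ‖F k t‖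
        = |lam ^ k / (Real.Gamma (α₁ * k + β₁) * Real.Gamma (α₂ * k + β₂))| *
            ∫ t in Set.Ioi (0:ℝ), ‖Real.exp (-(s * t)) * (t ^ (α₁ * k + β₁ - 1) *
              (Real.log t - digamma (α₁ * k + β₁)))‖ := by
      rw [← integral_const_mul]
      refine setIntegral_congr_fun measurableSet_Ioi fun t ht => ?_
      rw [hFeq k]
      simp only [Real.norm_eq_abs]
      rw [← abs_mul]
    rw [h1]
    have h2 := norm_kernel_integral_le hε hε1 hk hs
    have habs : |lam ^ k / (Real.Gamma (α₁ * k + β₁) * Real.Gamma (α₂ * k + β₂))|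
        = |lam| ^ k / (Real.Gamma (α₁ * k + β₁) * Real.Gamma (α₂ * k + β₂)) := by
      rw [abs_div, abs_pow, abs_of_pos (mul_pos (hΓA k) (hΓB k))]
    rw [habs]
    refine (mul_le_mul_of_nonneg_left h2 (by positivity)).trans (le_of_eq ?_)
    simp only [hgdef, hDdef, hrdef]
    rw [hpow k, mul_pow]
    field_simp
    ring
  have hsum : Summable (fun k => ∫ t in Set.Ioi (0:ℝ), ‖F k t‖) := by
    obtain ⟨N, hN⟩ := Filter.eventually_atTop.mp hbound
    rw [← summable_nat_add_iff N]
    refine Summable.of_nonneg_of_le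
      (fun k => integral_nonneg fun t => norm_nonneg _)
      (fun k => hN (k + N) (Nat.le_add_left _ _))
      ?_
    exact (summable_nat_add_iff N).mpr hgsum
  -- assemble
  have hmain := integral_tsum_of_summable_integral_norm hint hsum
  have hLHS : (∫ t in Set.Ioi (0 : ℝ), Real.exp (-(s * t)) *
        ∑' k : ℕ, lam ^ k * t ^ (α₁ * k + β₁ - 1) *
          (Real.log t - digamma (α₁ * k + β₁)) /
            (Real.Gamma (α₁ * k + β₁) * Real.Gamma (α₂ * k + β₂)))
      = ∫ t in Set.Ioi (0:ℝ), ∑' k, F k t := by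
    refine setIntegral_congr_fun measurableSet_Ioi fun t ht => ?_
    exact (tsum_mul_left).symm
  rw [hLHS, ← hmain]
  have : ∑' k, (∫ t in Set.Ioi (0:ℝ), F k t)
      = (-(Real.log s) * s ^ (-β₁)) *
          ∑' k : ℕ, (lam * s ^ (-α₁)) ^ k / Real.Gamma (α₂ * k + β₂) := by
    rw [← tsum_mul_left]
    exact tsum_congr hval
  rw [this, Real.rpow_neg hs.le]
  ring
end

section
/- Let α₁, β₁, α₂, β₂ > 0, λ ∈ ℝ, and let s > 0 be a real number. Then ∫₀^∞ e^{−st} · (∑_{k=0}^∞ (− k · ψ(α₂k+β₂)) · λ^k · t^{α₁k+β₁−1} / (Γ(α₁k+β₁) · Γ(α₂k+β₂))) dt = − (1/s^{β₁}) · ∑_{k=0}^∞ (k · ψ(α₂k+β₂) / Γ(α₂k+β₂)) · (λ · s^{−α₁})^k. (The integrand series is the term-by-term derivative with respect to α₂ of t^{β₁−1} E_{(α₁,β₁),(α₂,β₂)}(λ t^{α₁}).) -/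
open Real MeasureTheory Set Filter

private lemma diff_logGamma {x : ℝ} (hx : 0 < x) : DifferentiableAt ℝ (Real.log ∘ Real.Gamma) x := by
  refine (Real.differentiableAt_Gamma ?_).log (Real.Gamma_ne_zero ?_) <;>
  exact fun m => (((neg_nonpos).mpr (Nat.cast_nonneg m)).trans_lt hx).ne'

private lemma logGamma_rec {x : ℝ} (hx : 0 < x) :
    (Real.log ∘ Real.Gamma) (x + 1) = (Real.log ∘ Real.Gamma) x + Real.log x := by
  simp only [Function.comp_apply, Real.Gamma_add_one hx.ne',
    Real.log_mul hx.ne' (Real.Gamma_pos_of_pos hx).ne', add_comm]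

private lemma digamma_le_log {x : ℝ} (hx : 0 < x) : digamma x ≤ Real.log x := by
  have h := convexOn_log_Gamma.deriv_le_slope (mem_Ioi.mpr hx)
    (mem_Ioi.mpr (by linarith)) (by linarith : x < x + 1) (diff_logGamma hx)
  rw [slope_def_field, logGamma_rec hx] at h
  simpa [digamma, Function.comp_def] using h

private lemma log_le_digamma {x : ℝ} (hx : 1 < x) : Real.log (x - 1) ≤ digamma x := by
  have h := convexOn_log_Gamma.slope_le_deriv (mem_Ioi.mpr (by linarith : (0:ℝ) < x - 1))
    (mem_Ioi.mpr (by linarith)) (by linarith : x - 1 < x) (diff_logGamma (by linarith))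
  rw [slope_def_field] at h
  have hrec : (Real.log ∘ Real.Gamma) x - (Real.log ∘ Real.Gamma) (x-1) = Real.log (x-1) := by
    have := logGamma_rec (x := x - 1) (by linarith)
    rw [sub_add_cancel] at this
    rw [this]; ring
  rw [show x - (x-1) = 1 by ring, div_one, hrec] at h
  simpa [digamma, Function.comp_def] using h

private lemma digamma_abs_le {x : ℝ} (hx : 2 ≤ x) : |digamma x| ≤ x := by
  rw [abs_le]
  refine ⟨?_, ?_⟩
  · have h1 := log_le_digamma (by linarith : 1 < x)
    have h0 : (0:ℝ) ≤ Real.log (x - 1) := Real.log_nonneg (by linarith)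
    linarith
  · have h1 := digamma_le_log (by linarith : (0:ℝ) < x)
    have h2 := Real.log_le_sub_one_of_pos (by linarith : (0:ℝ) < x)
    linarith

private lemma Gamma_lower {x a : ℝ} (hx : 2 ≤ x) (ha : 0 < a) :
    Real.Gamma x * (x - 1) ^ a ≤ Real.Gamma (x + a) := by
  have hx0 : (0:ℝ) < x := by linarith
  have h := convexOn_log_Gamma.deriv_le_slope (mem_Ioi.mpr hx0)
    (mem_Ioi.mpr (by linarith)) (by linarith : x < x + a) (diff_logGamma hx0)
  rw [slope_def_field, add_sub_cancel_left] at h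
  have hd : Real.log (x - 1) ≤ deriv (Real.log ∘ Real.Gamma) x := by
    have := log_le_digamma (by linarith : 1 < x)
    simpa [digamma, Function.comp_def] using this
  have key : (Real.log ∘ Real.Gamma) x + a * Real.log (x - 1) ≤ (Real.log ∘ Real.Gamma) (x + a) := by
    have := (le_div_iff₀ ha).mp (hd.trans h)
    linarith
  have hGx : (0:ℝ) < Real.Gamma x := Real.Gamma_pos_of_pos hx0
  have hGxa : (0:ℝ) < Real.Gamma (x + a) := Real.Gamma_pos_of_pos (by linarith)
  calc Real.Gamma x * (x-1)^a
      = Real.exp ((Real.log ∘ Real.Gamma) x + a * Real.log (x-1)) := by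
        rw [Real.exp_add, Function.comp_apply, Real.exp_log hGx,
          Real.rpow_def_of_pos (by linarith : (0:ℝ) < x - 1), mul_comm (Real.log (x-1)) a]
    _ ≤ Real.exp ((Real.log ∘ Real.Gamma) (x + a)) := Real.exp_le_exp.mpr key
    _ = Real.Gamma (x + a) := by rw [Function.comp_apply, Real.exp_log hGxa]

private lemma tendsto_lin (a b : ℝ) (ha : 0 < a) :
    Tendsto (fun k : ℕ => a * k + b) atTop atTop := by
  apply Filter.tendsto_atTop_add_const_right
  exact (tendsto_natCast_atTop_atTop (R := ℝ)).const_mul_atTop ha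

private lemma summable_aux (a b r : ℝ) (ha : 0 < a) (hb : 0 < b) (hr : 0 ≤ r) :
    Summable (fun k : ℕ => ((k:ℝ)+1) * (a*k+b) * r^k / Real.Gamma (a*k+b)) := by
  apply summable_of_ratio_norm_eventually_le (r := 1/2) (by norm_num)
  have h1 : ∀ᶠ k : ℕ in atTop, (2:ℝ) ≤ a*k+b :=
    (tendsto_lin a b ha).eventually_ge_atTop 2
  have h2 : ∀ᶠ k : ℕ in atTop, a ≤ a*k+b :=
    (tendsto_lin a b ha).eventually_ge_atTop a
  have h3 : ∀ᶠ k : ℕ in atTop, 8*r + 1 ≤ (a*k+b-1)^a := by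
    have : Tendsto (fun k : ℕ => (a*k+b-1)^a) atTop atTop :=
      (tendsto_rpow_atTop ha).comp (tendsto_lin a (b-1) ha |>.congr (by intro k; ring_nf))
    exact this.eventually_ge_atTop _
  filter_upwards [h1, h2, h3] with k hk1 hk2 hk3
  set x := a*(k:ℝ)+b with hxdef
  have hx0 : (0:ℝ) < x := by linarith
  have hx1 : a*((k:ℝ)+1)+b = x + a := by ring
  have hG : (0:ℝ) < Real.Gamma x := Real.Gamma_pos_of_pos hx0
  have hG2 : (0:ℝ) < Real.Gamma (x+a) := Real.Gamma_pos_of_pos (by linarith)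
  have hP : (0:ℝ) ≤ (x-1)^a := Real.rpow_nonneg (by linarith) a
  have hq : (0:ℝ) ≤ r^k := pow_nonneg hr k
  have key := Gamma_lower hk1 ha
  rw [Real.norm_of_nonneg (by positivity), Real.norm_of_nonneg (by positivity)]
  push_cast
  rw [hx1, mul_div_assoc', div_le_div_iff₀ hG2 hG]
  have hrp : r^(k+1) = r * r^k := by ring
  rw [hrp]
  calc ((k:ℝ)+1+1) * (x+a) * (r * r^k) * Real.Gamma x
      ≤ (2*((k:ℝ)+1)) * (2*x) * (r * r^k) * Real.Gamma x := by
        have hk0 : (0:ℝ) ≤ (k:ℝ)+1 := by positivity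
        have e1 : (k:ℝ)+1+1 ≤ 2*((k:ℝ)+1) := by linarith
        have e2 : x + a ≤ 2*x := by linarith
        have := mul_le_mul (mul_le_mul e1 e2 (by linarith) (by positivity))
          (le_refl (r * r^k)) (by positivity) (by positivity)
        exact mul_le_mul_of_nonneg_right this hG.le
    _ = ((k:ℝ)+1) * x * r^k * Real.Gamma x * (4*r) := by ring
    _ ≤ ((k:ℝ)+1) * x * r^k * Real.Gamma x * (1/2 * (x-1)^a) := by
        apply mul_le_mul_of_nonneg_left _ (by positivity)
        linarith
    _ = 1/2 * (((k:ℝ)+1) * x * r^k) * (Real.Gamma x * (x-1)^a) := by ring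
    _ ≤ 1/2 * (((k:ℝ)+1) * x * r^k) * Real.Gamma (x+a) := by
        apply mul_le_mul_of_nonneg_left key (by positivity)
    _ = 1/2 * (((k:ℝ)+1) * x * r^k) * Real.Gamma (x+a) := by ring

theorem laplace_deriv_alpha2_4ML (α₁ β₁ α₂ β₂ lam s : ℝ) (hα₁ : 0 < α₁) (hβ₁ : 0 < β₁)
    (hα₂ : 0 < α₂) (hβ₂ : 0 < β₂) (hs : 0 < s) :
    (∫ t in Set.Ioi (0 : ℝ), Real.exp (-(s * t)) *
        ∑' k : ℕ, (-((k : ℝ) * digamma (α₂ * k + β₂))) * lam ^ k *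
          t ^ (α₁ * k + β₁ - 1) /
            (Real.Gamma (α₁ * k + β₁) * Real.Gamma (α₂ * k + β₂)))
      = -((1 / s ^ β₁) *
          ∑' k : ℕ, ((k : ℝ) * digamma (α₂ * k + β₂) / Real.Gamma (α₂ * k + β₂)) *
            (lam * s ^ (-α₁)) ^ k) := by
  set c : ℕ → ℝ := fun k =>
    (-((k : ℝ) * digamma (α₂ * k + β₂))) * lam ^ k /
      (Real.Gamma (α₁ * k + β₁) * Real.Gamma (α₂ * k + β₂)) with hc
  set F : ℕ → ℝ → ℝ := fun k t => c k * (t ^ (α₁ * k + β₁ - 1) * Real.exp (-(s * t))) with hFdef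
  have haux : ∀ k : ℕ, (0:ℝ) ≤ α₁ * k := fun k =>
    mul_nonneg hα₁.le (Nat.cast_nonneg (α := ℝ) k)
  have ha_pos : ∀ k : ℕ, (0:ℝ) < α₁ * k + β₁ := fun k => by nlinarith [haux k]
  have hx_pos : ∀ k : ℕ, (0:ℝ) < α₂ * k + β₂ := fun k => by
    nlinarith [mul_nonneg hα₂.le (Nat.cast_nonneg (α := ℝ) k)]
  have hGa : ∀ k : ℕ, (0:ℝ) < Real.Gamma (α₁ * k + β₁) := fun k =>
    Real.Gamma_pos_of_pos (ha_pos k)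
  have hG2 : ∀ k : ℕ, (0:ℝ) < Real.Gamma (α₂ * k + β₂) := fun k =>
    Real.Gamma_pos_of_pos (hx_pos k)
  -- integrability of each term
  have hint : ∀ k : ℕ, IntegrableOn
      (fun t : ℝ => t ^ (α₁ * k + β₁ - 1) * Real.exp (-(s * t))) (Ioi 0) := by
    intro k
    have := integrableOn_rpow_mul_exp_neg_mul_rpow (p := 1) (s := α₁ * k + β₁ - 1) (b := s)
      (by nlinarith [haux k]) one_pos hs
    refine this.congr_fun (fun t ht => ?_) measurableSet_Ioi
    beta_reduce
    rw [Real.rpow_one, neg_mul]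
  have hFint : ∀ k : ℕ, Integrable (F k) (volume.restrict (Ioi 0)) := fun k =>
    ((hint k).const_mul (c k))
  -- value of each integral
  have hval : ∀ k : ℕ, ∫ t in Ioi (0:ℝ), t ^ (α₁ * k + β₁ - 1) * Real.exp (-(s * t))
      = (1/s) ^ (α₁ * k + β₁) * Real.Gamma (α₁ * k + β₁) := fun k =>
    Real.integral_rpow_mul_exp_neg_mul_Ioi (ha_pos k) hs
  have hpow : ∀ k : ℕ, ((1:ℝ)/s) ^ (α₁ * k + β₁) = (1/s)^β₁ * ((1/s)^α₁)^k := by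
    intro k
    rw [Real.rpow_add (by positivity), mul_comm ((1/s : ℝ) ^ (α₁ * (k:ℝ)))]
    congr 1
    rw [Real.rpow_mul (by positivity), Real.rpow_natCast]
  -- norm integrals
  have hnorm : ∀ k : ℕ, (∫ t in Ioi (0:ℝ), ‖F k t‖)
      = |c k| * ((1/s) ^ (α₁ * k + β₁) * Real.Gamma (α₁ * k + β₁)) := by
    intro k
    have heq : ∀ t ∈ Ioi (0:ℝ), ‖F k t‖
        = |c k| * (t ^ (α₁ * k + β₁ - 1) * Real.exp (-(s * t))) := by
      intro t ht
      have ht0 : (0:ℝ) < t := ht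
      rw [hFdef, Real.norm_eq_abs, abs_mul,
        abs_of_nonneg (mul_nonneg (Real.rpow_nonneg ht0.le _) (Real.exp_pos _).le)]
    rw [setIntegral_congr_fun measurableSet_Ioi heq, integral_const_mul, hval k]
  -- summability of norm integrals
  have habs : ∀ k : ℕ, |c k| = (k : ℝ) * |digamma (α₂ * k + β₂)| * |lam| ^ k /
      (Real.Gamma (α₁ * k + β₁) * Real.Gamma (α₂ * k + β₂)) := by
    intro k
    rw [hc]
    rw [abs_div, abs_mul, abs_neg, abs_mul, Nat.abs_cast, abs_pow,
      abs_of_pos (mul_pos (hGa k) (hG2 k))]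
  set r : ℝ := |lam| * (1/s)^α₁ with hr
  have hr0 : (0:ℝ) ≤ r := by positivity
  have hg : Summable (fun k : ℕ =>
      (1/s:ℝ)^β₁ * (((k:ℝ)+1) * (α₂*k+β₂) * r^k / Real.Gamma (α₂*k+β₂))) :=
    (summable_aux α₂ β₂ r hα₂ hβ₂ hr0).mul_left _
  have hsum : Summable (fun k : ℕ => ∫ t in Ioi (0:ℝ), ‖F k t‖) := by
    apply Summable.of_norm_bounded_eventually_nat hg
    filter_upwards [(tendsto_lin α₂ β₂ hα₂).eventually_ge_atTop 2] with k hk2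
    rw [Real.norm_of_nonneg (integral_nonneg fun t => norm_nonneg _), hnorm k]
    have hmass : |c k| * ((1/s) ^ (α₁ * k + β₁) * Real.Gamma (α₁ * k + β₁))
        = (1/s:ℝ)^β₁ * ((k:ℝ) * |digamma (α₂ * k + β₂)| * r^k / Real.Gamma (α₂*k+β₂)) := by
      rw [habs k, hpow k, hr]
      field_simp
      ring
    rw [hmass]
    gcongr
    · linarith
    · exact digamma_abs_le hk2
  -- interchange sum and integral
  have key : (∑' k : ℕ, ∫ t in Ioi (0:ℝ), F k t) = ∫ t in Ioi (0:ℝ), ∑' k : ℕ, F k t :=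
    integral_tsum_of_summable_integral_norm hFint hsum
  have hfun : ∀ t : ℝ, Real.exp (-(s * t)) *
      (∑' k : ℕ, (-((k : ℝ) * digamma (α₂ * k + β₂))) * lam ^ k * t ^ (α₁ * k + β₁ - 1) /
        (Real.Gamma (α₁ * k + β₁) * Real.Gamma (α₂ * k + β₂)))
      = ∑' k : ℕ, F k t := by
    intro t
    rw [← tsum_mul_left]
    exact tsum_congr fun k => by rw [hFdef, hc]; ring
  have hsb : ((1:ℝ)/s) ^ β₁ = 1 / s ^ β₁ := by
    rw [one_div, Real.inv_rpow hs.le, one_div]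
  have hsa : s ^ (-α₁) = ((1:ℝ)/s) ^ α₁ := by
    rw [one_div, Real.inv_rpow hs.le, Real.rpow_neg hs.le]
  calc (∫ t in Set.Ioi (0 : ℝ), Real.exp (-(s * t)) *
        ∑' k : ℕ, (-((k : ℝ) * digamma (α₂ * k + β₂))) * lam ^ k *
          t ^ (α₁ * k + β₁ - 1) /
            (Real.Gamma (α₁ * k + β₁) * Real.Gamma (α₂ * k + β₂)))
      = ∫ t in Ioi (0:ℝ), ∑' k : ℕ, F k t := by simp_rw [hfun]
    _ = ∑' k : ℕ, ∫ t in Ioi (0:ℝ), F k t := key.symm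
    _ = ∑' k : ℕ, (-(1 / s ^ β₁)) *
          (((k : ℝ) * digamma (α₂ * k + β₂) / Real.Gamma (α₂ * k + β₂)) *
            (lam * s ^ (-α₁)) ^ k) := by
        refine tsum_congr fun k => ?_
        simp only [hFdef]
        rw [integral_const_mul, hval k, hpow k, hsa]
        simp only [hc]
        rw [hsb]
        field_simp
        ring
    _ = -((1 / s ^ β₁) *
          ∑' k : ℕ, ((k : ℝ) * digamma (α₂ * k + β₂) / Real.Gamma (α₂ * k + β₂)) *
            (lam * s ^ (-α₁)) ^ k) := by rw [tsum_mul_left]; ring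
end
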